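/- arXiv:2109.07507 — 2 statements merged into one kernel-verified Lean document; each statement's English description precedes it below -/
import Mathlib

section
/- Let p, q ∈ ℂ[z₁,…,z_d] with p having no zeros in ℍ^d and vanishing to order M > 0 at 0, and suppose f = q/p is bounded on ℍ^d with non-tangential limit b = f*(0) at 0. Then for every v ∈ ℍ^d, the directional derivative D_v f(0) := lim_{r→0⁺} (f(rv) − b)/r exists and equals (Q_{M+1}(v) − b·P_{M+1}(v))/P_M(v), where P_j and Q_j denote the degree-j homogeneous parts of p and q respectively. -/
/-- `x` is an element of the set `D_z = {|z₁|,…,|z_d|, Im z₁,…,Im z_d}`. -/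
def MemDset {d : ℕ} (z : Fin d → ℂ) (x : ℝ) : Prop :=
  (∃ i, x = ‖z i‖) ∨ (∃ i, x = (z i).im)

/-- `z` lies in the non-tangential approach region
`AR_c = {z ∈ ℍ^d : 1/c ≤ x/y ≤ c for all x, y ∈ D_z}`. -/
def MemAR {d : ℕ} (c : ℝ) (z : Fin d → ℂ) : Prop :=
  (∀ i, 0 < (z i).im) ∧
    ∀ x y : ℝ, MemDset z x → MemDset z y → 1 / c ≤ x / y ∧ x / y ≤ c

/-- `f` has non-tangential limit `ω` at `0` via `ℍ^d`. -/
def NTLimitAtZero {d : ℕ} (f : (Fin d → ℂ) → ℂ) (ω : ℂ) : Prop :=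
  ∀ c : ℝ, 1 ≤ c → ∀ ε > (0 : ℝ), ∃ δ > (0 : ℝ), ∀ z : Fin d → ℂ,
    MemAR c z → (∀ i, ‖z i‖ < δ) → ‖f z - ω‖ < ε



section AuxBDD
open MvPolynomial Finset Metric Filter

lemma eval_homog_mul {d n : ℕ} {φ : MvPolynomial (Fin d) ℂ} (hφ : φ.IsHomogeneous n)
    (t : ℂ) (z : Fin d → ℂ) :
    eval (fun i => t * z i) φ = t ^ n * eval z φ := by
  rw [eval_eq' , eval_eq', Finset.mul_sum]
  apply Finset.sum_congr rfl
  intro dd hdd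
  have hsum : ∑ i : Fin d, dd i = n := by
    have h2 := hφ (mem_support_iff.mp hdd)
    rw [← h2, show (Finsupp.weight 1 : (Fin d →₀ ℕ) →+ ℕ) = Finsupp.degree from Finsupp.degree_eq_weight_one.symm, Finsupp.degree_apply]
    exact (Finset.sum_subset (Finset.subset_univ _)
      (fun i _ hi => Finsupp.notMem_support_iff.mp hi)).symm
  calc coeff dd φ * ∏ i, (t * z i) ^ dd i
      = coeff dd φ * ((∏ i, t ^ dd i) * ∏ i, z i ^ dd i) := by
        rw [← Finset.prod_mul_distrib]; simp [mul_pow]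
    _ = t ^ n * (coeff dd φ * ∏ i, z i ^ dd i) := by
        rw [Finset.prod_pow_eq_pow_sum, hsum]; ring

lemma eval_line_diff {d : ℕ} (v w : Fin d → ℂ) (φ : MvPolynomial (Fin d) ℂ) :
    Differentiable ℂ fun l : ℂ => eval (fun i => v i + l * w i) φ := by
  have h : (fun l : ℂ => eval (fun i => v i + l * w i) φ)
      = fun l => ∑ dd ∈ φ.support, coeff dd φ * ∏ i, (v i + l * w i) ^ dd i := by
    funext l; rw [eval_eq']
  rw [h]
  apply Differentiable.fun_sum
  intro dd _
  apply Differentiable.const_mul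
  apply Differentiable.fun_finsetProd
  intro i _
  exact ((differentiable_const _).add ((differentiable_id).mul_const _)).pow _

lemma shift_sum (cc : ℕ → ℂ) (K M : ℕ) (h0 : ∀ j < M, cc j = 0)
    (hK : ∀ j, K ≤ j → cc j = 0) (t : ℂ) :
    ∑ j ∈ range K, t ^ j * cc j = t ^ M * ∑ j ∈ range K, t ^ j * cc (M + j) := by
  have h1 : t ^ M * ∑ j ∈ range K, t ^ j * cc (M + j)
      = ∑ j ∈ range K, t ^ (M + j) * cc (M + j) := by
    rw [Finset.mul_sum]
    exact Finset.sum_congr rfl fun j _ => by rw [pow_add]; ring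
  have h2 : ∑ j ∈ range (M + K), t ^ j * cc j
      = ∑ j ∈ range M, t ^ j * cc j + ∑ j ∈ range K, t ^ (M + j) * cc (M + j) := by
    rw [Finset.sum_range_add]
  have h3 : ∑ j ∈ range M, t ^ j * cc j = 0 :=
    Finset.sum_eq_zero fun j hj => by rw [h0 j (mem_range.mp hj), mul_zero]
  have h4 : ∑ j ∈ range K, t ^ j * cc j = ∑ j ∈ range (M + K), t ^ j * cc j := by
    apply Finset.sum_subset (Finset.range_subset_range.mpr (Nat.le_add_left _ _))
    intro j _ hj
    rw [hK j (by simpa using hj), mul_zero]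
  rw [h4, h2, h3, zero_add, h1]

lemma eval_ray {d : ℕ} (φ : MvPolynomial (Fin d) ℂ) {K : ℕ} (hK : φ.totalDegree < K)
    (t : ℂ) (z : Fin d → ℂ) :
    eval (fun i => t * z i) φ
      = ∑ j ∈ range K, t ^ j * eval z (homogeneousComponent j φ) := by
  calc eval (fun i => t * z i) φ
      = ∑ j ∈ range (φ.totalDegree + 1), eval (fun i => t * z i) (homogeneousComponent j φ) := by
        rw [← map_sum, sum_homogeneousComponent]
    _ = ∑ j ∈ range (φ.totalDegree + 1), t ^ j * eval z (homogeneousComponent j φ) :=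
        Finset.sum_congr rfl fun j _ =>
          eval_homog_mul (homogeneousComponent_isHomogeneous j φ) t z
    _ = ∑ j ∈ range K, t ^ j * eval z (homogeneousComponent j φ) := by
        apply Finset.sum_subset (Finset.range_subset_range.mpr hK)
        intro j _ hj
        have : homogeneousComponent j φ = 0 :=
          homogeneousComponent_eq_zero j φ (by simp at hj; omega)
        rw [this]
        simp

lemma zero_pow_sum (a : ℕ → ℂ) (K : ℕ) (hK : 0 < K) :
    ∑ j ∈ range K, (0 : ℂ) ^ j * a j = a 0 := by
  rw [show K = (K - 1) + 1 by omega, Finset.sum_range_succ']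
  simp

/-- Step A: the lowest homogeneous part of a stable polynomial is nonvanishing on `ℍ^d`. -/
lemma lowest_part_ne_zero {d : ℕ} (p : MvPolynomial (Fin d) ℂ) (M : ℕ)
    (hstable : ∀ z : Fin d → ℂ, (∀ i, 0 < (z i).im) → MvPolynomial.eval z p ≠ 0)
    (hM : MvPolynomial.homogeneousComponent M p ≠ 0)
    (hMmin : ∀ j < M, MvPolynomial.homogeneousComponent j p = 0)
    (v : Fin d → ℂ) (hv : ∀ i, 0 < (v i).im) :
    eval v (homogeneousComponent M p) ≠ 0 := by
  intro hcM0
  set K := p.totalDegree + 1 with hKdef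
  -- a point where the M-th component is nonzero
  obtain ⟨z₀, hz₀⟩ : ∃ z₀ : Fin d → ℂ, eval z₀ (homogeneousComponent M p) ≠ 0 := by
    by_contra h
    push_neg at h
    exact hM (MvPolynomial.funext fun x => by simp [h x])
  set w : Fin d → ℂ := fun i => z₀ i - v i with hw
  set A : ℕ → ℂ → ℂ := fun j l => eval (fun i => v i + l * w i) (homogeneousComponent j p)
    with hA
  have hAdiff : ∀ j, Differentiable ℂ (A j) := fun j => eval_line_diff v w _
  have hAM0 : A M 0 = 0 := by
    have : (fun i => v i + (0:ℂ) * w i) = v := by funext i; simp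
    simpa [hA, this] using hcM0
  have hAM1 : A M 1 ≠ 0 := by
    have he : (fun i => v i + (1:ℂ) * w i) = z₀ := by funext i; simp [hw]
    show eval (fun i => v i + (1:ℂ) * w i) _ ≠ 0
    rw [he]; exact hz₀
  -- small neighborhood staying in ℍ^d
  set U : Set ℂ := {l : ℂ | ∀ i, 0 < (v i + l * w i).im} with hU
  have hUopen : IsOpen U := by
    have : U = ⋂ i, (fun l : ℂ => (v i + l * w i).im) ⁻¹' Set.Ioi 0 := by
      ext l; simp [hU, Set.mem_iInter]
    rw [this]
    exact isOpen_iInter_of_finite fun i =>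
      (isOpen_Ioi).preimage (Complex.continuous_im.comp (by fun_prop))
  have hU0 : (0 : ℂ) ∈ U := by
    intro i; simpa using hv i
  obtain ⟨ρ₁, hρ₁pos, hρ₁⟩ := Metric.isOpen_iff.mp hUopen 0 hU0
  -- the polynomial along the line
  set Pφ : Polynomial ℂ :=
    MvPolynomial.aeval (fun i => Polynomial.C (v i) + Polynomial.C (w i) * Polynomial.X)
      (homogeneousComponent M p) with hPφ
  have hPeval : ∀ l : ℂ, Pφ.eval l = A M l := by
    intro l
    have h1 : (Polynomial.aeval l : Polynomial ℂ →ₐ[ℂ] ℂ) Pφ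
        = MvPolynomial.aeval (fun i => v i + l * w i) (homogeneousComponent M p) := by
      rw [hPφ, MvPolynomial.comp_aeval_apply]
      have he : (fun i => (Polynomial.aeval l) (Polynomial.C (v i) + Polynomial.C (w i) * Polynomial.X))
          = fun i => v i + l * w i := by
        funext i; simp; ring
      rw [he]
    have h2 : (Polynomial.aeval l : Polynomial ℂ →ₐ[ℂ] ℂ) Pφ = Pφ.eval l := by
      rw [Polynomial.coe_aeval_eq_eval]
    have h3 : MvPolynomial.aeval (fun i => v i + l * w i) (homogeneousComponent M p)
        = A M l := by
      rw [MvPolynomial.aeval_eq_eval₂Hom, Algebra.algebraMap_self]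
      rfl
    rw [← h2, h1, h3]
  have hPne : Pφ ≠ 0 := fun h => hAM1 (by rw [← hPeval 1, h, Polynomial.eval_zero])
  -- choose a good radius ρ
  have hTfin : Set.Finite ((fun x : ℂ => ‖x‖) '' {x | Pφ.IsRoot x}) :=
    (Polynomial.finite_setOf_isRoot hPne).image _
  obtain ⟨ρ, hρmem, hρT⟩ :
      ∃ ρ, ρ ∈ Set.Ioo (0:ℝ) ρ₁ ∧ ρ ∉ (fun x : ℂ => ‖x‖) '' {x | Pφ.IsRoot x} := by
    have hinf : (Set.Ioo (0:ℝ) ρ₁).Infinite := Set.infinite_coe_iff.mp (Set.Ioo.infinite hρ₁pos)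
    obtain ⟨ρ, hρ⟩ := (hinf.diff hTfin).nonempty
    exact ⟨ρ, hρ.1, hρ.2⟩
  obtain ⟨hρpos, hρlt⟩ := hρmem
  have hball : closedBall (0:ℂ) ρ ⊆ U := fun l hl =>
    hρ₁ (by simpa [Metric.mem_ball, Metric.mem_closedBall] using lt_of_le_of_lt hl hρlt)
  have hφcirc : ∀ l ∈ sphere (0:ℂ) ρ, A M l ≠ 0 := by
    intro l hl hzero
    exact hρT ⟨l, by simpa [Polynomial.IsRoot, hPeval], by
      simpa [mem_sphere_iff_norm] using hl⟩
  -- minimum of |A M| on the circle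
  have hsph : (sphere (0:ℂ) ρ).Nonempty := NormedSpace.sphere_nonempty.mpr hρpos.le
  obtain ⟨l₀, hl₀mem, hl₀min⟩ := (isCompact_sphere (0:ℂ) ρ).exists_isMinOn hsph
    ((continuous_norm.comp (hAdiff M).continuous).continuousOn)
  set m : ℝ := ‖A M l₀‖ with hm
  have hmpos : 0 < m := norm_pos_iff.mpr (hφcirc l₀ hl₀mem)
  have hmmin : ∀ l ∈ sphere (0:ℂ) ρ, m ≤ ‖A M l‖ := fun l hl => hl₀min hl
  -- uniform bound for the tail coefficients on the closed ball
  have hcontg : Continuous (fun l : ℂ => (∑ j ∈ range K, ‖A (M + (j + 1)) l‖ : ℝ)) := by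
    apply continuous_finset_sum
    intro j _
    exact continuous_norm.comp (hAdiff _).continuous
  obtain ⟨B, hB⟩ := (isCompact_closedBall (0:ℂ) ρ).exists_bound_of_continuousOn
    hcontg.continuousOn
  have hBval : ∀ l ∈ closedBall (0:ℂ) ρ,
      (∑ j ∈ range K, ‖A (M + (j + 1)) l‖) ≤ B := by
    intro l hl
    have h0 : (0:ℝ) ≤ ∑ j ∈ range K, ‖A (M + (j + 1)) l‖ :=
      Finset.sum_nonneg fun j _ => norm_nonneg _
    have h1 := hB l hl
    rwa [Real.norm_of_nonneg h0] at h1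
  have hBnn : 0 ≤ B :=
    le_trans (Finset.sum_nonneg fun j _ => norm_nonneg _)
      (hBval 0 (Metric.mem_closedBall_self hρpos.le))
  -- choose a small positive real s
  set s : ℝ := min 1 (m / (2 * B + 2)) with hs
  have hspos : 0 < s := lt_min one_pos (by positivity)
  have hsle1 : s ≤ 1 := min_le_left _ _
  have hsB : s * B < m / 2 := by
    have h1 : s ≤ m / (2 * B + 2) := min_le_right _ _
    have h2 : s * B ≤ m / (2 * B + 2) * B := by nlinarith
    have h3 : m / (2 * B + 2) * B < m / 2 := by
      rw [div_mul_eq_mul_div, div_lt_div_iff₀ (by positivity) (by positivity)]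
      nlinarith
    linarith
  -- the perturbed function G
  set G : ℂ → ℂ := fun l => ∑ j ∈ range K, (s:ℂ) ^ j * A (M + j) l with hG
  -- evaluation identity
  have hGeval : ∀ l : ℂ, ((s:ℂ)) ^ M * G l = eval (fun i => (s:ℂ) * (v i + l * w i)) p := by
    intro l
    rw [eval_ray p (Nat.lt_succ_self _) (s:ℂ) (fun i => v i + l * w i)]
    rw [shift_sum (fun j => A j l) K M
      (fun j hj => by simp only [hA]; rw [hMmin j hj]; simp)
      (fun j hj => by
        simp only [hA]
        rw [homogeneousComponent_eq_zero j p (by omega)]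
        simp) (s:ℂ)]
  have hGne : ∀ l ∈ closedBall (0:ℂ) ρ, G l ≠ 0 := by
    intro l hl hzero
    have him : ∀ i, 0 < ((s:ℂ) * (v i + l * w i)).im := by
      intro i
      have h1 : 0 < (v i + l * w i).im := hball hl i
      have : ((s:ℂ) * (v i + l * w i)).im = s * (v i + l * w i).im := by
        simp [Complex.mul_im]
      rw [this]
      positivity
    have := hstable _ him
    rw [← hGeval l, hzero, mul_zero] at this
    exact this rfl
  -- tail estimate: |G l - A M l| ≤ s * B on the closed ball
  have htail : ∀ l ∈ closedBall (0:ℂ) ρ, ‖G l - A M l‖ ≤ s * B := by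
    intro l hl
    have hKpos : 0 < K := Nat.succ_pos _
    have hsplit : G l = (∑ j ∈ range (K - 1), (s:ℂ) ^ (j + 1) * A (M + (j + 1)) l)
        + (s:ℂ) ^ 0 * A (M + 0) l := by
      show (∑ j ∈ range K, (s:ℂ) ^ j * A (M + j) l) = _
      rw [show K = (K - 1) + 1 by omega, Finset.sum_range_succ']
      simp
    have hdiff : G l - A M l = ∑ j ∈ range (K - 1), (s:ℂ) ^ (j + 1) * A (M + (j + 1)) l := by
      rw [hsplit]; simp
    rw [hdiff]
    calc ‖∑ j ∈ range (K - 1), (s:ℂ) ^ (j + 1) * A (M + (j + 1)) l‖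
        ≤ ∑ j ∈ range (K - 1), ‖(s:ℂ) ^ (j + 1) * A (M + (j + 1)) l‖ := by
          exact norm_sum_le _ _
      _ ≤ ∑ j ∈ range (K - 1), s * ‖A (M + (j + 1)) l‖ := by
          apply Finset.sum_le_sum
          intro j _
          rw [norm_mul, norm_pow]
          have habs : ‖(s:ℂ)‖ = s := by
            exact Complex.norm_of_nonneg hspos.le
          rw [habs]
          have : s ^ (j + 1) ≤ s := by
            calc s ^ (j + 1) ≤ s ^ 1 := pow_le_pow_of_le_one hspos.le hsle1 (by omega)
              _ = s := pow_one s
          exact mul_le_mul_of_nonneg_right this (by positivity)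
      _ = s * ∑ j ∈ range (K - 1), ‖A (M + (j + 1)) l‖ := by
          rw [Finset.mul_sum]
      _ ≤ s * ∑ j ∈ range K, ‖A (M + (j + 1)) l‖ := by
          apply mul_le_mul_of_nonneg_left _ hspos.le
          apply Finset.sum_le_sum_of_subset_of_nonneg
            (Finset.range_subset_range.mpr (by omega))
          intro j _ _
          positivity
      _ ≤ s * B := mul_le_mul_of_nonneg_left (hBval l hl) hspos.le
  -- |G| ≥ m/2 on the sphere
  have hGsphere : ∀ l ∈ sphere (0:ℂ) ρ, m / 2 ≤ ‖G l‖ := by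
    intro l hl
    have h1 := hmmin l hl
    have h2 := htail l (sphere_subset_closedBall hl)
    have h3 : ‖A M l‖ ≤ ‖G l‖ + ‖G l - A M l‖ := by
      have h3 := norm_sub_le (G l) (G l - A M l)
      have h4 : G l - (G l - A M l) = A M l := by ring
      rwa [h4] at h3
    linarith
  -- maximum modulus principle for 1/G
  have hDCC : DiffContOnCl ℂ (fun l => (G l)⁻¹) (ball (0:ℂ) ρ) := by
    constructor
    · apply DifferentiableOn.inv
      · exact (Differentiable.differentiableOn (by
          apply Differentiable.fun_sum
          intro j _
          exact (differentiable_const _).mul (hAdiff _)))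
      · exact fun l hl => hGne l (ball_subset_closedBall hl)
    · rw [closure_ball _ hρpos.ne']
      apply ContinuousOn.inv₀
      · exact Continuous.continuousOn (by
          apply continuous_finset_sum
          intro j _
          exact (continuous_const).mul (hAdiff _).continuous)
      · exact hGne
  have hfront : ∀ l ∈ frontier (ball (0:ℂ) ρ), ‖(G l)⁻¹‖ ≤ 2 / m := by
    intro l hl
    rw [frontier_ball _ hρpos.ne'] at hl
    have h1 := hGsphere l hl
    rw [norm_inv]
    have hGlpos : 0 < ‖G l‖ :=
      norm_pos_iff.mpr (hGne l (sphere_subset_closedBall hl))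
    rw [show (2:ℝ) / m = (m / 2)⁻¹ by rw [inv_div]]
    exact inv_anti₀ (by positivity) h1
  have hmax := Complex.norm_le_of_forall_mem_frontier_norm_le isBounded_ball hDCC hfront
    (z := 0) (by rw [closure_ball _ hρpos.ne']; exact Metric.mem_closedBall_self hρpos.le)
  -- contradiction
  have hG0 : ‖G 0‖ ≤ s * B := by
    have := htail 0 (Metric.mem_closedBall_self hρpos.le)
    rwa [hAM0, sub_zero] at this
  have hG0ge : m / 2 ≤ ‖G 0‖ := by
    have hne := hGne 0 (Metric.mem_closedBall_self hρpos.le)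
    rw [norm_inv] at hmax
    have hpos : 0 < ‖G 0‖ := norm_pos_iff.mpr hne
    have := inv_le_of_inv_le₀ hpos hmax
    rwa [show ((2:ℝ) / m)⁻¹ = m / 2 by rw [inv_div]] at this
  linarith



lemma cont_sum (K : ℕ) (a : ℕ → ℂ) :
    Continuous fun r : ℝ => ∑ j ∈ range K, (r:ℂ) ^ j * a j :=
  continuous_finset_sum _ fun j _ => (Complex.continuous_ofReal.pow j).mul continuous_const

/-- **Theorem (existence and formula for boundary directional derivatives).**
Let `p, q ∈ ℂ[z₁,…,z_d]` with `p` zero-free on `ℍ^d` and vanishing to order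
`M > 0` at `0`, and suppose `f = q/p` is bounded on `ℍ^d` with non-tangential
limit `b` at `0`.  Then for every `v ∈ ℍ^d` the directional derivative
`D_v f(0) = lim_{r→0⁺} (f(rv) - b)/r` exists and equals
`(Q_{M+1}(v) - b P_{M+1}(v)) / P_M(v)`. -/
theorem boundary_directional_derivative (d : ℕ)
    (p q : MvPolynomial (Fin d) ℂ) (M : ℕ) (hMpos : 0 < M)
    (hstable : ∀ z : Fin d → ℂ, (∀ i, 0 < (z i).im) → MvPolynomial.eval z p ≠ 0)
    (hp0 : MvPolynomial.eval (0 : Fin d → ℂ) p = 0)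
    (hM : MvPolynomial.homogeneousComponent M p ≠ 0)
    (hMmin : ∀ j < M, MvPolynomial.homogeneousComponent j p = 0)
    (hbd : ∃ C : ℝ, ∀ z : Fin d → ℂ, (∀ i, 0 < (z i).im) →
      ‖MvPolynomial.eval z q / MvPolynomial.eval z p‖ ≤ C)
    (b : ℂ)
    (hlim : NTLimitAtZero (fun z => MvPolynomial.eval z q / MvPolynomial.eval z p) b)
    (v : Fin d → ℂ) (hv : ∀ i, 0 < (v i).im) :
    Filter.Tendsto
      (fun r : ℝ =>
        (MvPolynomial.eval (fun i => (r : ℂ) * v i) q /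
            MvPolynomial.eval (fun i => (r : ℂ) * v i) p - b) / (r : ℂ))
      (nhdsWithin 0 (Set.Ioi 0))
      (nhds ((MvPolynomial.eval v (MvPolynomial.homogeneousComponent (M + 1) q)
          - b * MvPolynomial.eval v (MvPolynomial.homogeneousComponent (M + 1) p)) /
        MvPolynomial.eval v (MvPolynomial.homogeneousComponent M p))) := by
  classical
  rcases Nat.eq_zero_or_pos d with hd0 | hdpos
  · subst hd0
    exact absurd hp0 (hstable 0 (fun i => i.elim0))
  haveI : Nonempty (Fin d) := ⟨⟨0, hdpos⟩⟩
  set K : ℕ := max p.totalDegree q.totalDegree + 1 with hKdef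
  have hpK : p.totalDegree < K := Nat.lt_succ_of_le (le_max_left _ _)
  have hqK : q.totalDegree < K := Nat.lt_succ_of_le (le_max_right _ _)
  have hKpos : 0 < K := Nat.succ_pos _
  set c : ℕ → ℂ := fun j => eval v (homogeneousComponent j p) with hcdef
  set e : ℕ → ℂ := fun j => eval v (homogeneousComponent j q) with hedef
  have hc0 : ∀ j < M, c j = 0 := fun j hj => by
    show eval v (homogeneousComponent j p) = 0
    rw [hMmin j hj]; simp
  have hcKz : ∀ j, K ≤ j → c j = 0 := fun j hj => by
    show eval v (homogeneousComponent j p) = 0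
    rw [homogeneousComponent_eq_zero j p (by omega)]; simp
  have heKz : ∀ j, K ≤ j → e j = 0 := fun j hj => by
    show eval v (homogeneousComponent j q) = 0
    rw [homogeneousComponent_eq_zero j q (by omega)]; simp
  have hcM : c M ≠ 0 := lowest_part_ne_zero p M hstable hM hMmin v hv
  -- the shifted denominator series
  have hβray : ∀ t : ℂ, eval (fun i => t * v i) p
      = t ^ M * ∑ j ∈ range K, t ^ j * c (M + j) := fun t => by
    rw [eval_ray p hpK t v]; exact shift_sum c K M hc0 hcKz t
  have hβ0 : ∑ j ∈ range K, ((0:ℝ):ℂ) ^ j * c (M + j) = c M := by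
    rw [Complex.ofReal_zero, zero_pow_sum _ K hKpos]
    rfl
  have hβcont := cont_sum K (fun j => c (M + j))
  have hβtend : Tendsto (fun r : ℝ => ∑ j ∈ range K, (r:ℂ) ^ j * c (M + j))
      (nhdsWithin 0 (Set.Ioi 0)) (nhds (c M)) := by
    have := hβcont.tendsto 0
    rw [hβ0] at this
    exact this.mono_left nhdsWithin_le_nhds
  -- positivity of imaginary parts along the ray
  have hrayim : ∀ r : ℝ, 0 < r → ∀ i, 0 < (((r:ℝ):ℂ) * v i).im := by
    intro r hr i
    have : ((r:ℂ) * v i).im = r * (v i).im := by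
      simp [Complex.mul_im]
    rw [this]
    exact mul_pos hr (hv i)
  have hβne : ∀ r : ℝ, 0 < r → (∑ j ∈ range K, (r:ℂ) ^ j * c (M + j)) ≠ 0 := by
    intro r hr h0
    have := hstable _ (hrayim r hr)
    rw [hβray, h0, mul_zero] at this
    exact this rfl
  -- the non-tangential limit along the ray
  set amax : ℝ := Finset.univ.sup' Finset.univ_nonempty (fun i => ‖v i‖) with hamax
  set imin : ℝ := Finset.univ.inf' Finset.univ_nonempty (fun i => (v i).im) with himin
  have himinpos : 0 < imin := by
    rw [himin, Finset.lt_inf'_iff]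
    exact fun i _ => hv i
  have him_le_abs : ∀ i, (v i).im ≤ ‖v i‖ := fun i =>
    le_trans (le_abs_self _) (Complex.abs_im_le_norm (v i))
  have hDbound : ∀ x : ℝ, MemDset v x → imin ≤ x ∧ x ≤ amax := by
    intro x hx
    rcases hx with ⟨i, rfl⟩ | ⟨i, rfl⟩
    · constructor
      · exact le_trans (Finset.inf'_le (fun i => (v i).im) (Finset.mem_univ i)) (him_le_abs i)
      · exact Finset.le_sup' (fun i => ‖v i‖) (Finset.mem_univ i)
    · constructor
      · exact Finset.inf'_le (fun i => (v i).im) (Finset.mem_univ i)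
      · exact le_trans (him_le_abs i) (Finset.le_sup' (fun i => ‖v i‖) (Finset.mem_univ i))
    -- bounds
  have hia : imin ≤ amax := by
    obtain ⟨i⟩ := (inferInstance : Nonempty (Fin d))
    exact le_trans (Finset.inf'_le (fun i => (v i).im) (Finset.mem_univ i))
      (le_trans (him_le_abs i) (Finset.le_sup' (fun i => ‖v i‖) (Finset.mem_univ i)))
  have hamaxpos : 0 < amax := lt_of_lt_of_le himinpos hia
  set c₀ : ℝ := amax / imin with hc₀def
  have hc₀1 : 1 ≤ c₀ := (one_le_div himinpos).mpr hia
  have hARray : ∀ r : ℝ, 0 < r → MemAR c₀ (fun i => (r:ℂ) * v i) := by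
    intro r hr
    constructor
    · exact hrayim r hr
    · intro x y hx hy
      have hscale : ∀ z : ℝ, MemDset (fun i => (r:ℂ) * v i) z →
          ∃ z' : ℝ, MemDset v z' ∧ z = r * z' := by
        intro z hz
        rcases hz with ⟨i, rfl⟩ | ⟨i, rfl⟩
        · refine ⟨‖v i‖, Or.inl ⟨i, rfl⟩, ?_⟩
          rw [norm_mul, Complex.norm_real, Real.norm_of_nonneg hr.le]
        · refine ⟨(v i).im, Or.inr ⟨i, rfl⟩, ?_⟩
          simp [Complex.mul_im]
      obtain ⟨x', hx', rfl⟩ := hscale x hx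
      obtain ⟨y', hy', rfl⟩ := hscale y hy
      rw [mul_div_mul_left _ _ (ne_of_gt hr)]
      obtain ⟨hx1, hx2⟩ := hDbound x' hx'
      obtain ⟨hy1, hy2⟩ := hDbound y' hy'
      have hy'pos : 0 < y' := lt_of_lt_of_le himinpos hy1
      constructor
      · rw [hc₀def, one_div_div]
        exact div_le_div₀ (le_trans himinpos.le hx1) hx1 (lt_of_lt_of_le himinpos hy1) hy2
      · rw [hc₀def]
        exact div_le_div₀ hamaxpos.le hx2 himinpos hy1
  have hray : Tendsto (fun r : ℝ => eval (fun i => (r:ℂ) * v i) q /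
      eval (fun i => (r:ℂ) * v i) p) (nhdsWithin 0 (Set.Ioi 0)) (nhds b) := by
    rw [Metric.tendsto_nhdsWithin_nhds]
    intro ε hε
    obtain ⟨δ, hδpos, hδ⟩ := hlim c₀ hc₀1 ε hε
    refine ⟨δ / amax, by positivity, ?_⟩
    intro r hr hrd
    have hrpos : 0 < r := hr
    have habs : ∀ i, ‖(r:ℂ) * v i‖ < δ := by
      intro i
      rw [norm_mul, Complex.norm_real, Real.norm_of_nonneg hrpos.le]
      calc r * ‖v i‖ ≤ r * amax :=
            mul_le_mul_of_nonneg_left (Finset.le_sup' (fun i => ‖v i‖) (Finset.mem_univ i)) hrpos.le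
        _ < δ := by
            rw [Real.dist_eq, sub_zero, abs_of_pos hrpos] at hrd
            calc r * amax < δ / amax * amax := by
                  exact mul_lt_mul_of_pos_right hrd hamaxpos
              _ = δ := div_mul_cancel₀ _ hamaxpos.ne'
    have := hδ (fun i => (r:ℂ) * v i) (hARray r hrpos) habs
    rwa [Complex.dist_eq]
  -- boundedness along the ray
  obtain ⟨C, hC⟩ := hbd
  have hCray : ∀ᶠ r : ℝ in nhdsWithin 0 (Set.Ioi 0),
      ‖eval (fun i => (r:ℂ) * v i) q / eval (fun i => (r:ℂ) * v i) p‖ ≤ C :=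
    eventually_nhdsWithin_of_forall fun r hr => by
      exact hC _ (hrayim r hr)
  -- Step B1: e j = 0 for j < M
  have he0 : ∀ j, j < M → e j = 0 := by
    intro j
    induction j using Nat.strong_induction_on with
    | _ j ih =>
      intro hjM
      have hprev : ∀ i < j, e i = 0 := fun i hi => ih i hi (hi.trans hjM)
      have hqray : ∀ t : ℂ, eval (fun i => t * v i) q
          = t ^ j * ∑ l ∈ range K, t ^ l * e (j + l) := fun t => by
        rw [eval_ray q hqK t v]; exact shift_sum e K j hprev heKz t
      have hid : ∀ r : ℝ, r ∈ Set.Ioi (0:ℝ) →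
          (∑ l ∈ range K, (r:ℂ) ^ l * e (j + l)) / (∑ l ∈ range K, (r:ℂ) ^ l * c (M + l))
          = (r:ℂ) ^ (M - j) * (eval (fun i => (r:ℂ) * v i) q /
              eval (fun i => (r:ℂ) * v i) p) := by
        intro r hr
        have ht : ((r:ℝ):ℂ) ≠ 0 := Complex.ofReal_ne_zero.mpr (ne_of_gt hr)
        rw [hqray, hβray]
        rw [mul_div_assoc']
        rw [← mul_assoc, ← pow_add, show M - j + j = M by omega]
        rw [mul_div_mul_left _ _ (pow_ne_zero M ht)]
      have hlim1 : Tendsto (fun r : ℝ =>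
          (∑ l ∈ range K, (r:ℂ) ^ l * e (j + l)) / (∑ l ∈ range K, (r:ℂ) ^ l * c (M + l)))
          (nhdsWithin 0 (Set.Ioi 0)) (nhds (e j / c M)) := by
        have h1 := (cont_sum K (fun l => e (j + l))).tendsto 0
        rw [show (∑ l ∈ range K, (((0:ℝ)):ℂ) ^ l * e (j + l)) = e j by
          rw [Complex.ofReal_zero, zero_pow_sum _ K hKpos]; rfl] at h1
        exact (h1.mono_left nhdsWithin_le_nhds).div hβtend (by simpa using hcM)
      have hlim2 : Tendsto (fun r : ℝ =>
          (∑ l ∈ range K, (r:ℂ) ^ l * e (j + l)) / (∑ l ∈ range K, (r:ℂ) ^ l * c (M + l)))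
          (nhdsWithin 0 (Set.Ioi 0)) (nhds 0) := by
        apply Filter.Tendsto.congr'
          (Filter.eventuallyEq_of_mem self_mem_nhdsWithin fun r hr => (hid r hr).symm)
        apply Filter.Tendsto.zero_mul_isBoundedUnder_le
        · have h2 := (Complex.continuous_ofReal.fun_pow (M - j)).tendsto 0
          rw [show (((0:ℝ):ℂ)) ^ (M - j) = 0 by
            rw [Complex.ofReal_zero]; exact zero_pow (by omega)] at h2
          exact h2.mono_left nhdsWithin_le_nhds
        · exact Filter.isBoundedUnder_of_eventually_le (a := C) hCray
      have huniq := tendsto_nhds_unique hlim1 hlim2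
      rcases div_eq_zero_iff.mp huniq with h | h
      · exact h
      · exact absurd h (by simpa using hcM)
  -- Step B2: e M = b * c M
  have hqrayM : ∀ t : ℂ, eval (fun i => t * v i) q
      = t ^ M * ∑ l ∈ range K, t ^ l * e (M + l) := fun t => by
    rw [eval_ray q hqK t v]; exact shift_sum e K M he0 heKz t
  have hfid : ∀ r : ℝ, r ∈ Set.Ioi (0:ℝ) →
      eval (fun i => (r:ℂ) * v i) q / eval (fun i => (r:ℂ) * v i) p
      = (∑ l ∈ range K, (r:ℂ) ^ l * e (M + l)) / (∑ l ∈ range K, (r:ℂ) ^ l * c (M + l)) := by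
    intro r hr
    have ht : ((r:ℝ):ℂ) ≠ 0 := Complex.ofReal_ne_zero.mpr (ne_of_gt hr)
    rw [hqrayM, hβray, mul_div_mul_left _ _ (pow_ne_zero M ht)]
  have hlimeM : Tendsto (fun r : ℝ =>
      (∑ l ∈ range K, (r:ℂ) ^ l * e (M + l)) / (∑ l ∈ range K, (r:ℂ) ^ l * c (M + l)))
      (nhdsWithin 0 (Set.Ioi 0)) (nhds (e M / c M)) := by
    have h1 := (cont_sum K (fun l => e (M + l))).tendsto 0
    rw [show (∑ l ∈ range K, (((0:ℝ)):ℂ) ^ l * e (M + l)) = e M by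
      rw [Complex.ofReal_zero, zero_pow_sum _ K hKpos]; rfl] at h1
    exact (h1.mono_left nhdsWithin_le_nhds).div hβtend (by simpa using hcM)
  have hlimb : Tendsto (fun r : ℝ =>
      (∑ l ∈ range K, (r:ℂ) ^ l * e (M + l)) / (∑ l ∈ range K, (r:ℂ) ^ l * c (M + l)))
      (nhdsWithin 0 (Set.Ioi 0)) (nhds b) :=
    hray.congr' (Filter.eventuallyEq_of_mem self_mem_nhdsWithin fun r hr => hfid r hr)
  have heM : e M = b * c M := by
    have h := tendsto_nhds_unique hlimeM hlimb
    rw [div_eq_iff hcM] at h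
    exact h
  -- Step C: the final limit
  set dd : ℕ → ℂ := fun l => e (M + l) - b * c (M + l) with hdd
  have hdd0 : ∀ l < 1, dd l = 0 := by
    intro l hl
    interval_cases l
    show e (M + 0) - b * c (M + 0) = 0
    rw [show M + 0 = M from rfl, heM, sub_self]
  have hddK : ∀ l, K ≤ l → dd l = 0 := by
    intro l hl
    show e (M + l) - b * c (M + l) = 0
    rw [heKz (M + l) (by omega), hcKz (M + l) (by omega)]
    simp
  have hfactor : ∀ t : ℂ,
      (∑ l ∈ range K, t ^ l * e (M + l)) - b * (∑ l ∈ range K, t ^ l * c (M + l))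
      = t * ∑ l ∈ range K, t ^ l * dd (1 + l) := by
    intro t
    have h1 : (∑ l ∈ range K, t ^ l * e (M + l)) - b * (∑ l ∈ range K, t ^ l * c (M + l))
        = ∑ l ∈ range K, t ^ l * dd l := by
      rw [Finset.mul_sum, ← Finset.sum_sub_distrib]
      exact Finset.sum_congr rfl fun l _ => by show _ = t ^ l * (e (M + l) - b * c (M + l)); ring
    rw [h1, shift_sum dd K 1 hdd0 hddK t, pow_one]
  have hfinal : ∀ r : ℝ, r ∈ Set.Ioi (0:ℝ) →
      (eval (fun i => (r:ℂ) * v i) q / eval (fun i => (r:ℂ) * v i) p - b) / (r:ℂ)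
      = (∑ l ∈ range K, (r:ℂ) ^ l * dd (1 + l)) / (∑ l ∈ range K, (r:ℂ) ^ l * c (M + l)) := by
    intro r hr
    have ht : ((r:ℝ):ℂ) ≠ 0 := Complex.ofReal_ne_zero.mpr (ne_of_gt hr)
    have hSp := hβne r hr
    rw [hfid r hr]
    have h2 : (∑ l ∈ range K, (r:ℂ) ^ l * e (M + l)) / (∑ l ∈ range K, (r:ℂ) ^ l * c (M + l)) - b
        = ((r:ℂ) * ∑ l ∈ range K, (r:ℂ) ^ l * dd (1 + l)) / (∑ l ∈ range K, (r:ℂ) ^ l * c (M + l)) := by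
      rw [← hfactor ((r:ℂ)), sub_div, mul_div_assoc, div_self hSp, mul_one]
    rw [h2, div_div,
      mul_comm ((r:ℂ)) (∑ l ∈ range K, (r:ℂ) ^ l * dd (1 + l)),
      mul_div_mul_right _ _ ht]
  have hlimfin : Tendsto (fun r : ℝ =>
      (∑ l ∈ range K, (r:ℂ) ^ l * dd (1 + l)) / (∑ l ∈ range K, (r:ℂ) ^ l * c (M + l)))
      (nhdsWithin 0 (Set.Ioi 0)) (nhds (dd 1 / c M)) := by
    have h1 := (cont_sum K (fun l => dd (1 + l))).tendsto 0
    rw [show (∑ l ∈ range K, (((0:ℝ)):ℂ) ^ l * dd (1 + l)) = dd 1 by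
      rw [Complex.ofReal_zero, zero_pow_sum _ K hKpos]] at h1
    exact (h1.mono_left nhdsWithin_le_nhds).div hβtend (by simpa using hcM)
  have hgoalval : dd 1 / c M
      = (eval v (homogeneousComponent (M + 1) q)
          - b * eval v (homogeneousComponent (M + 1) p)) / eval v (homogeneousComponent M p) := rfl
  rw [← hgoalval]
  exact hlimfin.congr' (Filter.eventuallyEq_of_mem self_mem_nhdsWithin
    fun r hr => (hfinal r hr).symm)
end AuxBDD
end

section
/- Let H be a finite-dimensional complex Hilbert space and let T be an operator on ℂ ⊕ H with positive imaginary part, written in block form T = [[c, β*],[α, S]] with c ∈ ℂ, α, β ∈ H, and S a linear operator on H. Then α − β ∈ Range(S); moreover Ker(S) = Ker(S*), so that H = Ker(S) ⊕ Range(S) is an orthogonal direct sum, and with respect to this decomposition S = [[0, 0],[0, Ŝ]] where Ŝ is the compression of S to Range(S). -/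
open Complex

private lemma aux_quad (a b : ℝ) (h : ∀ t : ℝ, 0 ≤ t * a + t ^ 2 * b) : a = 0 := by
  by_contra ha
  have h1 := h (-a / (|b| + 1))
  have hb : 0 ≤ |b| := abs_nonneg b
  have hb1 : b ≤ |b| := le_abs_self b
  have hb2 : 0 < |b| + 1 := by linarith
  have ha2 : 0 < a ^ 2 := by positivity
  have e1 : (-a / (|b| + 1)) * a + (-a / (|b| + 1)) ^ 2 * b
      = (a ^ 2 * (b - (|b| + 1))) / (|b| + 1) ^ 2 := by
    field_simp
    ring
  rw [e1] at h1
  have h2 : (0:ℝ) * ((|b| + 1) ^ 2) ≤ a ^ 2 * (b - (|b| + 1)) :=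
    (le_div_iff₀ (by positivity)).mp h1
  nlinarith [mul_le_mul_of_nonneg_left (by linarith : b - (|b| + 1) ≤ -1) ha2.le]

/-- If `Im ⟪x, S x⟫ ≥ 0` for all `x` and `S v = 0`, then `adjoint S v = 0`. -/
private lemma aux_ker {H : Type*} [NormedAddCommGroup H]
    [InnerProductSpace ℂ H] [FiniteDimensional ℂ H]
    (S : H →ₗ[ℂ] H) (h : ∀ x : H, 0 ≤ (inner ℂ x (S x) : ℂ).im)
    (v : H) (hv : S v = 0) : LinearMap.adjoint S v = 0 := by
  have key : ∀ u : H, (inner ℂ v (S u) : ℂ).im = 0 := by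
    intro u
    apply aux_quad _ (inner ℂ u (S u) : ℂ).im
    intro t
    have := h (v + (t : ℂ) • u)
    have hexp : (inner ℂ (v + (t : ℂ) • u) (S (v + (t : ℂ) • u)) : ℂ)
        = (t : ℂ) * inner ℂ v (S u) + (t : ℂ) ^ 2 * inner ℂ u (S u) := by
      simp only [map_add, map_smul, inner_add_left, inner_add_right, inner_smul_left,
        inner_smul_right, hv, inner_zero_right, Complex.conj_ofReal, smul_zero, add_zero,
        mul_zero]
      ring
    rw [hexp] at this
    simpa [Complex.add_im, Complex.mul_im, ← Complex.ofReal_pow] using this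
  have key2 : ∀ u : H, (inner ℂ v (S u) : ℂ) = 0 := by
    intro u
    have h1 := key u
    have h2 := key (Complex.I • u)
    rw [map_smul, inner_smul_right] at h2
    simp only [Complex.mul_im, Complex.I_re, Complex.I_im] at h2
    apply Complex.ext
    · simpa using h2
    · exact h1
  have := key2 (LinearMap.adjoint S v)
  rw [← LinearMap.adjoint_inner_left] at this
  exact inner_self_eq_zero.mp this

/-- **Lemma (structure of operators with positive imaginary part).**
Let `H` be a finite-dimensional complex Hilbert space and let
`T = [[c, β*],[α, S]]` be an operator on `ℂ ⊕ H` with positive imaginary part,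
where the positivity is expressed as `Im ⟪(z,v), T(z,v)⟫ ≥ 0` for all `z ∈ ℂ`,
`v ∈ H` (with `T(z,v) = (cz + ⟪β, v⟫, zα + Sv)`).  Then `α - β ∈ Range S`;
moreover `Ker S = Ker S*` and `H = Ker S ⊕ Range S` is an orthogonal direct sum
(expressed via `(Ker S)ᗮ = Range S`), so that with respect to this decomposition
`S = [[0,0],[0,Ŝ]]` with `Ŝ` the compression of `S` to `Range S`. -/
theorem pip_block_structure {H : Type*} [NormedAddCommGroup H]
    [InnerProductSpace ℂ H] [FiniteDimensional ℂ H]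
    (c : ℂ) (α β : H) (S : H →ₗ[ℂ] H)
    (hPIP : ∀ (z : ℂ) (v : H),
      0 ≤ ((starRingEnd ℂ) z * (c * z + (inner ℂ β v : ℂ))
            + (inner ℂ v (z • α + S v) : ℂ)).im) :
    α - β ∈ LinearMap.range S ∧
    LinearMap.ker S = LinearMap.ker (LinearMap.adjoint S) ∧
    (LinearMap.ker S)ᗮ = LinearMap.range S := by
  -- positivity of Im S
  have hS : ∀ x : H, 0 ≤ (inner ℂ x (S x) : ℂ).im := by
    intro x
    have := hPIP 0 x
    simpa using this
  -- ker S = ker S*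
  have hker : LinearMap.ker S = LinearMap.ker (LinearMap.adjoint S) := by
    ext v
    simp only [LinearMap.mem_ker]
    constructor
    · exact aux_ker S hS v
    · intro hv
      have h2 : ∀ x : H, 0 ≤ (inner ℂ x ((-(LinearMap.adjoint S)) x) : ℂ).im := by
        intro x
        have : (inner ℂ x ((LinearMap.adjoint S) x) : ℂ)
            = starRingEnd ℂ (inner ℂ x (S x) : ℂ) := by
          rw [LinearMap.adjoint_inner_right, ← inner_conj_symm]
        have h3 : (inner ℂ x ((-(LinearMap.adjoint S)) x) : ℂ)
            = -starRingEnd ℂ (inner ℂ x (S x) : ℂ) := by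
          simp [this]
        rw [h3]
        simp only [Complex.neg_im, Complex.conj_im, neg_neg]
        exact hS x
      have := aux_ker (-(LinearMap.adjoint S)) h2 v (by simp [hv])
      rw [map_neg] at this
      simpa [LinearMap.adjoint_adjoint] using this
  -- (ker S)ᗮ = range S
  have horth : (LinearMap.ker S)ᗮ = LinearMap.range S := by
    have hle : LinearMap.range S ≤ (LinearMap.ker S)ᗮ := by
      rintro _ ⟨x, rfl⟩
      rw [Submodule.mem_orthogonal]
      intro v hv
      rw [hker, LinearMap.mem_ker] at hv
      rw [← LinearMap.adjoint_inner_left, hv, inner_zero_left]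
    have hdim : Module.finrank ℂ (LinearMap.range S)
        = Module.finrank ℂ (LinearMap.ker S)ᗮ := by
      have h1 := LinearMap.finrank_range_add_finrank_ker S
      have h2 := Submodule.finrank_add_finrank_orthogonal (K := LinearMap.ker S)
      omega
    exact (Submodule.eq_of_le_of_finrank_eq hle hdim).symm
  refine ⟨?_, hker, horth⟩
  rw [← horth, Submodule.mem_orthogonal]
  intro v hv
  rw [LinearMap.mem_ker] at hv
  set w : ℂ := inner ℂ β v with hw
  set u : ℂ := inner ℂ v α with hu
  set q : ℂ := u - starRingEnd ℂ w with hq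
  have key : ∀ s : ℂ, (s * q).im = 0 := by
    intro s
    apply aux_quad _ ((Complex.normSq s : ℂ) * c).im
    intro t
    have := hPIP ((t : ℂ) * s) v
    have hexp : ((starRingEnd ℂ) ((t:ℂ) * s) * (c * ((t:ℂ) * s) + w)
            + (inner ℂ v (((t:ℂ) * s) • α + S v) : ℂ))
        = (t:ℂ) * (starRingEnd ℂ s * w + s * u)
          + (t:ℂ) ^ 2 * ((Complex.normSq s : ℂ) * c) := by
      rw [inner_add_right, inner_smul_right, hv, inner_zero_right]
      simp only [map_mul, Complex.conj_ofReal, Complex.normSq_eq_conj_mul_self]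
      ring
    rw [hexp] at this
    have him : (starRingEnd ℂ s * w + s * u).im = (s * q).im := by
      rw [hq]
      have : starRingEnd ℂ s * w + s * u = s * (u - starRingEnd ℂ w)
          + (starRingEnd ℂ s * w + s * starRingEnd ℂ w) := by ring
      rw [this, Complex.add_im]
      have : (starRingEnd ℂ s * w + s * starRingEnd ℂ w).im = 0 := by
        simp only [Complex.add_im, Complex.mul_im, Complex.conj_re, Complex.conj_im]
        ring
      rw [this, add_zero]
    rw [← him]
    simpa [Complex.add_im, Complex.mul_im, ← Complex.ofReal_pow] using this
  have hq0 : q = 0 := by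
    by_contra hq0
    have := key (Complex.I * starRingEnd ℂ q)
    rw [mul_assoc, ← Complex.normSq_eq_conj_mul_self] at this
    simp only [Complex.mul_im, Complex.I_re, Complex.I_im, Complex.ofReal_re,
      Complex.ofReal_im] at this
    have : Complex.normSq q = 0 := by linarith [this]
    exact hq0 (Complex.normSq_eq_zero.mp this)
  have : (inner ℂ v (α - β) : ℂ) = q := by
    rw [hq, hu, hw, inner_sub_right, inner_conj_symm]
  rw [this, hq0]
end
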